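/- Let I(r) = √3·∫_r¹ dξ/√(1-ξ³). Then the equation 2·I'(r)/I(r) = -1/r has exactly one solution r ∈ (0,1). -/
import Mathlib

open intervalIntegral
open MeasureTheory

noncomputable def Ifun : ℝ → ℝ :=
  fun r => Real.sqrt 3 * ∫ ξ in r..1, 1 / Real.sqrt (1 - ξ^3)

namespace Stmt16

noncomputable def f : ℝ → ℝ := fun ξ => 1 / Real.sqrt (1 - ξ^3)
noncomputable def h : ℝ → ℝ := fun ξ => (1 - ξ) ^ (-(1/2) : ℝ)

lemma f_nonneg (ξ : ℝ) : 0 ≤ f ξ := by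
  unfold f; positivity

lemma f_pos {ξ : ℝ} (hξ : ξ < 1) : 0 < f ξ := by
  have h1 : 0 < 1 - ξ^3 := by nlinarith [sq_nonneg ξ, sq_nonneg (1+ξ)]
  unfold f
  positivity

lemma f_meas : Measurable f :=
  measurable_const.div ((Real.continuous_sqrt.comp (by continuity)).measurable)

lemma h_eq {x : ℝ} (hx : x ≤ 1) : h x = 1 / Real.sqrt (1 - x) := by
  unfold h
  rw [Real.rpow_neg (by linarith), ← Real.sqrt_eq_rpow, one_div]

lemma h_intable (a b : ℝ) : IntervalIntegrable h volume a b := by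
  unfold h
  have := (intervalIntegrable_rpow' (a := 1 - a) (b := 1 - b)
    (by norm_num : (-1:ℝ) < -(1/2))).comp_sub_left 1
  simp only [sub_sub_cancel] at this
  exact this

lemma f_le_h {x : ℝ} (h0 : 0 ≤ x) (h1 : x ≤ 1) : f x ≤ h x := by
  rw [h_eq h1]
  unfold f
  rcases eq_or_lt_of_le h1 with rfl | hlt
  · norm_num
  · have hx3 : x^3 ≤ x := by
      nlinarith [mul_nonneg (mul_nonneg h0 h0) (by linarith : (0:ℝ) ≤ 1 - x),
        mul_nonneg h0 (by linarith : (0:ℝ) ≤ 1 - x)]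
    have hpos : 0 < Real.sqrt (1 - x) := Real.sqrt_pos.2 (by linarith)
    have hle : Real.sqrt (1 - x) ≤ Real.sqrt (1 - x^3) :=
      Real.sqrt_le_sqrt (by linarith)
    exact one_div_le_one_div_of_le hpos hle

lemma f_intable {r : ℝ} (hr : 0 ≤ r) (hr1 : r ≤ 1) : IntervalIntegrable f volume r 1 := by
  apply (h_intable r 1).mono_fun f_meas.aestronglyMeasurable
  filter_upwards [MeasureTheory.ae_restrict_mem measurableSet_uIoc] with x hx
  rw [Set.uIoc_of_le hr1] at hx
  rw [Real.norm_of_nonneg (f_nonneg x), Real.norm_of_nonneg]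
  · exact f_le_h (le_trans hr hx.1.le) hx.2
  · rw [h_eq hx.2]; positivity

lemma f_contAt {r : ℝ} (hr1 : r < 1) : ContinuousAt f r := by
  have h1 : 0 < 1 - r^3 := by nlinarith [sq_nonneg r, sq_nonneg (1+r)]
  apply ContinuousAt.div continuousAt_const
  · exact (Real.continuous_sqrt.comp (by continuity)).continuousAt
  · exact (Real.sqrt_pos.2 h1).ne'

lemma Ifun_hasDeriv {r : ℝ} (hr0 : 0 ≤ r) (hr1 : r < 1) :
    HasDerivAt Ifun (Real.sqrt 3 * (-f r)) r := by
  have H : HasDerivAt (fun u => ∫ ξ in u..1, f ξ) (-f r) r :=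
    integral_hasDerivAt_left (f_intable hr0 hr1.le)
      (f_meas.stronglyMeasurable.stronglyMeasurableAtFilter) (f_contAt hr1)
  exact H.const_mul (Real.sqrt 3)



lemma Ifun_eq (r : ℝ) : Ifun r = Real.sqrt 3 * ∫ ξ in r..1, f ξ := rfl

lemma deriv_Ifun {r : ℝ} (hr0 : 0 ≤ r) (hr1 : r < 1) :
    deriv Ifun r = Real.sqrt 3 * (-f r) := (Ifun_hasDeriv hr0 hr1).deriv

lemma Ifun_anti {r s : ℝ} (hr0 : 0 ≤ r) (hrs : r < s) (hs1 : s ≤ 1) :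
    Ifun s < Ifun r := by
  have hint : IntervalIntegrable f volume r 1 := f_intable hr0 (by linarith)
  have h1 : IntervalIntegrable f volume r s :=
    hint.mono_set (Set.uIcc_subset_uIcc Set.left_mem_uIcc (by
      rw [Set.uIcc_of_le (by linarith : r ≤ (1:ℝ))]; exact ⟨hrs.le, hs1⟩))
  have h2 : IntervalIntegrable f volume s 1 :=
    hint.mono_set (Set.uIcc_subset_uIcc (by
      rw [Set.uIcc_of_le (by linarith : r ≤ (1:ℝ))]; exact ⟨hrs.le, hs1⟩)
      Set.right_mem_uIcc)
  have hadd := integral_add_adjacent_intervals h1 h2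
  have hpos := intervalIntegral_pos_of_pos_on h1
    (fun x hx => f_pos (lt_of_lt_of_le hx.2 hs1)) hrs
  have h3 : (0:ℝ) < Real.sqrt 3 := by positivity
  rw [Ifun_eq, Ifun_eq, ← hadd]
  exact mul_lt_mul_of_pos_left (by linarith) h3

lemma Ifun_pos {r : ℝ} (hr0 : 0 ≤ r) (hr1 : r < 1) : 0 < Ifun r := by
  have hint : IntervalIntegrable f volume r 1 := f_intable hr0 hr1.le
  have hpos := intervalIntegral_pos_of_pos_on hint
    (fun x hx => f_pos hx.2) hr1
  have h3 : (0:ℝ) < Real.sqrt 3 := by positivity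
  rw [Ifun_eq]
  positivity

noncomputable def g : ℝ → ℝ := fun r => Ifun r - 2 * Real.sqrt 3 * r * f r

lemma f_strictMono {r s : ℝ} (hr0 : 0 ≤ r) (hrs : r < s) (hs1 : s < 1) :
    f r < f s := by
  have hs3 : 0 < 1 - s^3 := by nlinarith [sq_nonneg s, sq_nonneg (1+s)]
  have hlt : 1 - s^3 < 1 - r^3 := by
    have := pow_lt_pow_left₀ hrs hr0 (three_ne_zero)
    linarith
  have h1 : Real.sqrt (1 - s^3) < Real.sqrt (1 - r^3) :=
    Real.sqrt_lt_sqrt hs3.le hlt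
  have h2 : 0 < Real.sqrt (1 - s^3) := Real.sqrt_pos.2 hs3
  exact one_div_lt_one_div_of_lt h2 h1

lemma g_strictAntiOn : StrictAntiOn g (Set.Ioo (0:ℝ) 1) := by
  intro r hr s hs hrs
  have h1 : Ifun s < Ifun r := Ifun_anti hr.1.le hrs hs.2.le
  have h2 : 2 * Real.sqrt 3 * r * f r < 2 * Real.sqrt 3 * s * f s := by
    have h3 : (0:ℝ) < Real.sqrt 3 := by positivity
    have h4 : f r < f s := f_strictMono hr.1.le hrs hs.2
    have h5 : 0 < f r := f_pos hr.2
    have h6 : r * f r < s * f s := mul_lt_mul'' hrs h4 hr.1.le h5.le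
    nlinarith [mul_lt_mul_of_pos_left h6 (by positivity : (0:ℝ) < 2 * Real.sqrt 3)]
  unfold g
  linarith

lemma g_contAt {r : ℝ} (hr0 : 0 < r) (hr1 : r < 1) : ContinuousAt g r := by
  have h1 : ContinuousAt Ifun r := (Ifun_hasDeriv hr0.le hr1).continuousAt
  have h2 : ContinuousAt f r := f_contAt hr1
  exact h1.sub (((continuousAt_const.mul continuousAt_id).mul h2))

lemma g_quarter : 0 < g (1/4 : ℝ) := by
  have h3 : (0:ℝ) < Real.sqrt 3 := by positivity
  -- lower bound for Ifun (1/4)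
  have hint : IntervalIntegrable f volume (1/4) 1 := f_intable (by norm_num) (by norm_num)
  have h1 : IntervalIntegrable f volume (1/4) (4/5) :=
    hint.mono_set (Set.uIcc_subset_uIcc Set.left_mem_uIcc (by
      rw [Set.uIcc_of_le (by norm_num : (1/4:ℝ) ≤ 1)]; constructor <;> norm_num))
  have h2 : IntervalIntegrable f volume (4/5) 1 :=
    hint.mono_set (Set.uIcc_subset_uIcc (by
      rw [Set.uIcc_of_le (by norm_num : (1/4:ℝ) ≤ 1)]; constructor <;> norm_num)
      Set.right_mem_uIcc)
  have hadd := integral_add_adjacent_intervals h1 h2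
  have hge : (11/20 : ℝ) ≤ ∫ ξ in (1/4:ℝ)..(4/5), f ξ := by
    have := intervalIntegral.integral_mono_on (μ := volume)
      (f := fun _ => (1:ℝ)) (g := f) (by norm_num : (1/4:ℝ) ≤ 4/5)
      intervalIntegrable_const h1 ?_
    · simp only [intervalIntegral.integral_const, smul_eq_mul, mul_one] at this
      linarith
    · intro x hx
      have h0x : (0:ℝ) ≤ x := le_trans (by norm_num) hx.1
      have hx3 : 0 < 1 - x^3 := by
        nlinarith [pow_le_pow_left₀ h0x hx.2 3]
      have hle1 : Real.sqrt (1 - x^3) ≤ 1 :=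
        Real.sqrt_le_one.2 (by nlinarith [pow_nonneg h0x 3])
      have hpos : 0 < Real.sqrt (1 - x^3) := Real.sqrt_pos.2 hx3
      show (1:ℝ) ≤ 1 / Real.sqrt (1 - x^3)
      rw [le_div_iff₀ hpos]
      linarith
  have hge2 : (0:ℝ) ≤ ∫ ξ in (4/5:ℝ)..1, f ξ :=
    intervalIntegral.integral_nonneg (by norm_num) (fun x _ => f_nonneg x)
  have hIlow : Real.sqrt 3 * (11/20) ≤ Ifun (1/4) := by
    rw [Ifun_eq, ← hadd]
    have : (11/20 : ℝ) ≤ (∫ ξ in (1/4:ℝ)..(4/5), f ξ) + ∫ ξ in (4/5:ℝ)..1, f ξ := by linarith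
    nlinarith
  -- upper bound for the second term
  have hfval : f (1/4) < 11/10 := by
    have h63 : ((10:ℝ)/11) < Real.sqrt (1 - (1/4:ℝ)^3) := by
      rw [show (1 - (1/4:ℝ)^3) = 63/64 by norm_num,
        Real.lt_sqrt (by norm_num : (0:ℝ) ≤ (10:ℝ)/11)]
      norm_num
    have hpos : 0 < Real.sqrt (1 - (1/4:ℝ)^3) := by positivity
    show 1 / Real.sqrt (1 - (1/4:ℝ)^3) < 11/10
    rw [div_lt_iff₀ hpos]
    nlinarith
  unfold g
  have hf0 : 0 < f (1/4:ℝ) := f_pos (by norm_num)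
  nlinarith

lemma g_nine : g (9/10 : ℝ) < 0 := by
  have h3 : (0:ℝ) < Real.sqrt 3 := by positivity
  -- upper bound for Ifun (9/10)
  have hmono : (∫ ξ in (9/10:ℝ)..1, f ξ) ≤ ∫ ξ in (9/10:ℝ)..1, h ξ := by
    apply intervalIntegral.integral_mono_on (by norm_num : (9/10:ℝ) ≤ 1)
      (f_intable (by norm_num) (by norm_num)) (h_intable _ _)
    intro x hx
    exact f_le_h (le_trans (by norm_num) hx.1) hx.2
  have e1 : (∫ ξ in (9/10:ℝ)..1, h ξ) = ∫ x in (0:ℝ)..(1/10), x ^ (-(1/2) : ℝ) := by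
    have := intervalIntegral.integral_comp_sub_left (a := (9/10:ℝ)) (b := 1)
      (fun y : ℝ => y ^ (-(1/2) : ℝ)) 1
    unfold h
    rw [this]
    norm_num
  have e2 : (∫ x in (0:ℝ)..(1/10), x ^ (-(1/2) : ℝ)) = 2 * Real.sqrt (1/10) := by
    rw [integral_rpow (Or.inl (by norm_num : (-1:ℝ) < -(1/2)))]
    rw [show (-(1/2:ℝ) + 1) = 1/2 by norm_num, Real.zero_rpow (by norm_num : (1/2:ℝ) ≠ 0)]
    rw [Real.sqrt_eq_rpow]
    ring
  have hIup : Ifun (9/10) ≤ Real.sqrt 3 * (2 * Real.sqrt (1/10)) := by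
    rw [Ifun_eq]
    have := hmono.trans_eq (e1.trans e2)
    nlinarith
  -- lower bound for the subtracted term
  have hb : (0:ℝ) < Real.sqrt (271/1000) := Real.sqrt_pos.2 (by norm_num)
  have hfval : f (9/10 : ℝ) = 1 / Real.sqrt (271/1000) := by
    unfold f
    norm_num
  have hab : Real.sqrt (1/10) * Real.sqrt (271/1000) < 9/10 := by
    rw [← Real.sqrt_mul (by norm_num : (0:ℝ) ≤ 1/10)]
    rw [show (1/10 * (271/1000) : ℝ) = 271/10000 by norm_num]
    rw [Real.sqrt_lt' (by norm_num : (0:ℝ) < 9/10)]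
    norm_num
  have hkey : Real.sqrt (1/10) < (9/10) * (1 / Real.sqrt (271/1000)) := by
    rw [mul_one_div, lt_div_iff₀ hb]
    exact hab
  unfold g
  rw [hfval]
  have ha : (0:ℝ) ≤ Real.sqrt (1/10) := Real.sqrt_nonneg _
  nlinarith [mul_lt_mul_of_pos_left hkey (by positivity : (0:ℝ) < 2 * Real.sqrt 3)]

lemma eq_iff {r : ℝ} (hr : r ∈ Set.Ioo (0:ℝ) 1) :
    (2 * deriv Ifun r / Ifun r = -1/r) ↔ g r = 0 := by
  obtain ⟨hr0, hr1⟩ := hr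
  have hI : 0 < Ifun r := Ifun_pos hr0.le hr1
  rw [deriv_Ifun hr0.le hr1, div_eq_div_iff hI.ne' (ne_of_gt hr0)]
  unfold g
  constructor <;> intro hh <;> linear_combination hh

end Stmt16

theorem stmt_16 :
    ∃! r : ℝ, r ∈ Set.Ioo (0:ℝ) 1 ∧ 2 * deriv Ifun r / Ifun r = -1/r := by
  have hcont : ContinuousOn Stmt16.g (Set.Icc (1/4 : ℝ) (9/10)) := fun x hx =>
    (Stmt16.g_contAt (lt_of_lt_of_le (by norm_num) hx.1)
      (lt_of_le_of_lt hx.2 (by norm_num))).continuousWithinAt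
  have hmem : (0:ℝ) ∈ Set.Icc (Stmt16.g (9/10)) (Stmt16.g (1/4)) :=
    ⟨Stmt16.g_nine.le, Stmt16.g_quarter.le⟩
  obtain ⟨c, hc, hgc⟩ :=
    intermediate_value_Icc' (by norm_num : (1/4:ℝ) ≤ 9/10) hcont hmem
  have hcI : c ∈ Set.Ioo (0:ℝ) 1 :=
    ⟨lt_of_lt_of_le (by norm_num) hc.1, lt_of_le_of_lt hc.2 (by norm_num)⟩
  refine ⟨c, ⟨hcI, (Stmt16.eq_iff hcI).2 hgc⟩, ?_⟩
  rintro y ⟨hyI, hy⟩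
  exact Stmt16.g_strictAntiOn.injOn hyI hcI
    (((Stmt16.eq_iff hyI).1 hy).trans hgc.symm)
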